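/- Let Y and Z be subspaces of an Archimedean vector lattice X such that Y is uniformly closed and Z is finite-dimensional. Then Y + Z is uniformly closed. -/

import Mathlib

/-- Relative uniform convergence closedness: `A` is uniformly closed if it contains the
limit of every sequence in `A` that converges relatively uniformly (with regulator `e`). -/
def RUClosed {X : Type*} [AddCommGroup X] [Lattice X] [Module ℝ X] (A : Set X) : Prop :=
  ∀ (x : X) (a : ℕ → X) (e : X), 0 ≤ e → (∀ n, a n ∈ A) →
    (∀ ε : ℝ, 0 < ε → ∃ N, ∀ n ≥ N, |a n - x| ≤ ε • e) → x ∈ A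

/-- A linear functional is order bounded if it is bounded on every order interval. -/
def OrderBoundedFunc {X : Type*} [AddCommGroup X] [Lattice X] [Module ℝ X]
    (φ : X →ₗ[ℝ] ℝ) : Prop :=
  ∀ a b : X, ∃ M : ℝ, ∀ x : X, a ≤ x → x ≤ b → |φ x| ≤ M

/-- A submodule is a (vector) sublattice if it is closed under finite suprema. -/
def IsVectorSublattice {X : Type*} [AddCommGroup X] [Lattice X] [Module ℝ X]
    (Y : Submodule ℝ X) : Prop :=
  ∀ x ∈ Y, ∀ y ∈ Y, x ⊔ y ∈ Y

/-- A submodule is an order ideal if it is solid. -/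
def IsOrderIdeal {X : Type*} [AddCommGroup X] [Lattice X] [Module ℝ X]
    (J : Submodule ℝ X) : Prop :=
  ∀ x y : X, |x| ≤ |y| → y ∈ J → x ∈ J

/-- The Archimedean property for a vector lattice. -/
def ArchimedeanVL (X : Type*) [AddCommGroup X] [Lattice X] [Module ℝ X] : Prop :=
  ∀ x y : X, 0 ≤ x → (∀ n : ℕ, n • x ≤ y) → x = 0

set_option linter.unusedSectionVars false
set_option linter.unusedVariables false

section helpers
variable {X : Type*} [AddCommGroup X] [Lattice X]
    [CovariantClass X X (· + ·) (· ≤ ·)] [Module ℝ X] [PosSMulMono ℝ X]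

lemma my_smul_le_smul {c : ℝ} (hc : 0 ≤ c) {a b : X} (h : a ≤ b) : c • a ≤ c • b :=
  smul_le_smul_of_nonneg_left h hc

lemma my_smul_nonneg {c : ℝ} (hc : 0 ≤ c) {a : X} (ha : 0 ≤ a) : 0 ≤ c • a := by
  simpa using my_smul_le_smul hc ha

lemma my_smul_mono_scalar {c d : ℝ} (h : c ≤ d) {a : X} (ha : 0 ≤ a) : c • a ≤ d • a := by
  have h1 : 0 ≤ (d - c) • a := my_smul_nonneg (by linarith) ha
  have : c • a + 0 ≤ c • a + (d - c) • a := add_le_add_right h1 _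
  simpa [← add_smul] using this

lemma my_smul_sup {c : ℝ} (hc : 0 < c) (a b : X) : c • (a ⊔ b) = c • a ⊔ c • b := by
  apply le_antisymm
  · have h1 : a ≤ c⁻¹ • (c • a ⊔ c • b) := by
      have := my_smul_le_smul (le_of_lt (inv_pos.mpr hc)) (le_sup_left (a := c • a) (b := c • b))
      rwa [smul_smul, inv_mul_cancel₀ hc.ne', one_smul] at this
    have h2 : b ≤ c⁻¹ • (c • a ⊔ c • b) := by
      have := my_smul_le_smul (le_of_lt (inv_pos.mpr hc)) (le_sup_right (a := c • a) (b := c • b))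
      rwa [smul_smul, inv_mul_cancel₀ hc.ne', one_smul] at this
    have := my_smul_le_smul hc.le (sup_le h1 h2)
    rwa [smul_smul, mul_inv_cancel₀ hc.ne', one_smul] at this
  · exact sup_le (my_smul_le_smul hc.le le_sup_left) (my_smul_le_smul hc.le le_sup_right)

lemma my_abs_smul_nonneg {c : ℝ} (hc : 0 ≤ c) (a : X) : |c • a| = c • |a| := by
  rcases hc.lt_or_eq with h | h
  · rw [abs, abs, ← smul_neg, ← my_smul_sup h]
  · simp [← h]

lemma my_abs_smul (c : ℝ) (a : X) : |c • a| = |c| • |a| := by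
  rcases le_or_gt 0 c with h | h
  · rw [abs_of_nonneg h, my_abs_smul_nonneg h]
  · have h2 : c • a = (-c) • (-a) := by rw [neg_smul, smul_neg, neg_neg]
    rw [h2, my_abs_smul_nonneg (by linarith), abs_neg, abs_of_neg h]

/-- The key one-dimensional step. -/
lemma ru_step (Y : Submodule ℝ X) (hY : RUClosed (Y : Set X)) (z : X) :
    RUClosed ((Y ⊔ (ℝ ∙ z) : Submodule ℝ X) : Set X) := by
  by_cases hz : z ∈ Y
  · have hEq : (Y ⊔ (ℝ ∙ z)) = Y := by
      rw [sup_eq_left]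
      rwa [Submodule.span_singleton_le_iff_mem]
    rw [hEq]; exact hY
  · intro x a e he ha hconv
    have hdec : ∀ n, ∃ y ∈ Y, ∃ c : ℝ, a n = y + c • z := by
      intro n
      rcases Submodule.mem_sup.mp (ha n) with ⟨y, hy, w, hw, hyw⟩
      rcases Submodule.mem_span_singleton.mp hw with ⟨c, rfl⟩
      exact ⟨y, hy, c, hyw.symm⟩
    choose y hy c hc using hdec
    have hyeq : ∀ n, y n = a n - c n • z := by
      intro n; rw [hc n]; abel
    obtain ⟨N1, hN1⟩ := hconv 1 one_pos
    have habd : ∀ n ≥ N1, |a n| ≤ |x| + e := by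
      intro n hn
      calc |a n| = |(a n - x) + x| := by rw [sub_add_cancel]
        _ ≤ |a n - x| + |x| := abs_add_le _ _
        _ ≤ 1 • e + |x| := add_le_add_left (hN1 n hn) _
        _ = |x| + e := by rw [one_smul]; abel
    by_cases hb : ∃ M : ℝ, ∀ n, |c n| ≤ M
    · -- bounded coefficients: Bolzano–Weierstrass
      obtain ⟨M, hM⟩ := hb
      obtain ⟨l, -, φ, hφ, hl⟩ :=
        (isCompact_Icc (a := -M) (b := M)).tendsto_subseq
          (fun n => Set.mem_Icc.mpr (abs_le.mp (hM n)))
      have hxl : x - l • z ∈ Y := by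
        apply hY (x - l • z) (fun k => y (φ k)) (e + |z|)
          (add_nonneg he (abs_nonneg z)) (fun k => hy _)
        intro ε hε
        obtain ⟨N2, hN2⟩ := hconv (ε/2) (by linarith)
        obtain ⟨K, hK⟩ := Metric.tendsto_atTop.mp hl (ε/2) (by linarith)
        refine ⟨max N2 K, fun k hk => ?_⟩
        have hk1 : φ k ≥ N2 := le_trans (le_trans (le_max_left _ _) hk) (hφ.le_apply)
        have hk2 : k ≥ K := le_trans (le_max_right _ _) hk
        have hd : |c (φ k) - l| ≤ ε/2 := by
          have := hK k hk2
          rw [Real.dist_eq] at this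
          exact this.le
        have heq2 : y (φ k) - (x - l • z) = (a (φ k) - x) + (-((c (φ k) - l) • z)) := by
          rw [hyeq, sub_smul]; abel
        calc |y (φ k) - (x - l • z)|
            = |(a (φ k) - x) + (-((c (φ k) - l) • z))| := by rw [heq2]
          _ ≤ |a (φ k) - x| + |(-((c (φ k) - l) • z))| := abs_add_le _ _
          _ = |a (φ k) - x| + |c (φ k) - l| • |z| := by rw [abs_neg, my_abs_smul]
          _ ≤ (ε/2) • e + (ε/2) • |z| :=
              add_le_add (hN2 _ hk1) (my_smul_mono_scalar hd (abs_nonneg z))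
          _ ≤ ε • e + ε • |z| :=
              add_le_add (my_smul_mono_scalar (by linarith) he)
                (my_smul_mono_scalar (by linarith) (abs_nonneg z))
          _ = ε • (e + |z|) := (smul_add ε e |z|).symm
      refine Submodule.mem_sup.mpr ⟨x - l • z, hxl, l • z,
        Submodule.mem_span_singleton.mpr ⟨l, rfl⟩, by abel⟩
    · -- unbounded coefficients: contradiction with z ∉ Y
      exfalso
      have key : ∀ (M : ℝ) (N : ℕ), ∃ n ≥ N, M < |c n| := by
        intro M N
        by_contra hcon
        push_neg at hcon
        apply hb
        obtain ⟨B, hB⟩ : BddAbove (Set.range fun i : Fin N => |c i.1|) :=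
          Set.Finite.bddAbove (Set.finite_range _)
        refine ⟨max M B, fun n => ?_⟩
        rcases lt_or_ge n N with hn | hn
        · exact le_max_of_le_right (hB (Set.mem_range_self (⟨n, hn⟩ : Fin N)))
        · exact le_max_of_le_left (hcon n hn)
      have sel : ∀ k : ℕ, ∃ n ≥ N1, (k : ℝ) + 1 < |c n| := fun k => key _ _
      choose m hm1 hm2 using sel
      have hmne : ∀ k, c (m k) ≠ 0 := by
        intro k
        intro h0
        have := hm2 k
        rw [h0, abs_zero] at this
        have : (0:ℝ) ≤ (k:ℝ) := Nat.cast_nonneg k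
        linarith [hm2 k, abs_zero (α := ℝ)]
      apply hz
      apply hY z (fun k => (-(c (m k))⁻¹) • y (m k)) (|x| + e)
        (add_nonneg (abs_nonneg x) he)
        (fun k => Submodule.smul_mem Y _ (hy _))
      intro ε hε
      obtain ⟨K, hK⟩ := exists_nat_gt (1/ε)
      refine ⟨K, fun k hk => ?_⟩
      have hck : (1:ℝ)/ε < |c (m k)| := by
        have h1 : (K:ℝ) ≤ (k:ℝ) := Nat.cast_le.mpr hk
        have := hm2 k
        linarith
      have hcpos : 0 < |c (m k)| := lt_trans (by positivity) hck
      have hinv : |c (m k)|⁻¹ ≤ ε := by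
        rw [inv_le_comm₀ hcpos hε]
        calc ε⁻¹ = 1/ε := (one_div ε).symm
          _ ≤ |c (m k)| := hck.le
      have hdiff : (-(c (m k))⁻¹) • y (m k) - z = -((c (m k))⁻¹ • a (m k)) := by
        rw [hyeq, neg_smul, smul_sub, smul_smul, inv_mul_cancel₀ (hmne k), one_smul]
        abel
      calc |(-(c (m k))⁻¹) • y (m k) - z| = |(c (m k))⁻¹ • a (m k)| := by
            rw [hdiff, abs_neg]
        _ = |(c (m k))⁻¹| • |a (m k)| := my_abs_smul _ _
        _ = |c (m k)|⁻¹ • |a (m k)| := by rw [abs_inv]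
        _ ≤ |c (m k)|⁻¹ • (|x| + e) :=
            my_smul_le_smul (inv_nonneg.mpr hcpos.le) (habd _ (hm1 k))
        _ ≤ ε • (|x| + e) :=
            my_smul_mono_scalar hinv (add_nonneg (abs_nonneg x) he)

end helpers


theorem stmt11 {X : Type*} [AddCommGroup X] [Lattice X]
    [CovariantClass X X (· + ·) (· ≤ ·)] [Module ℝ X] [PosSMulMono ℝ X] (hArch : ArchimedeanVL X) (Y Z : Submodule ℝ X)
    (hY : RUClosed (Y : Set X)) (hZ : FiniteDimensional ℝ Z) :
    RUClosed ((Y ⊔ Z : Submodule ℝ X) : Set X) := by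
  classical
  obtain ⟨s, hs⟩ : Z.FG := Module.Finite.iff_fg.mp hZ
  rw [← hs]
  clear hs hZ
  induction s using Finset.induction_on with
  | empty => simpa using hY
  | @insert a s ha ih =>
      rw [Finset.coe_insert, Submodule.span_insert, sup_comm (ℝ ∙ a) _, ← sup_assoc]
      exact ru_step _ ih a
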